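/- Let Π be a set of permutation patterns with k = max_{π∈Π}|π|, and let τ ∈ S_n. Then P_i(τ) = P_{i+1}(τ) + P_i(τ↓_{i+1}) if i < n and i ≤ k; P_i(τ) = 1 if i = n and τ ∈ Π; and P_i(τ) = 0 in all other cases (in particular whenever i > k or i > n, and when i = n with τ ∉ Π). -/

import Mathlib

/-- `w` is a permutation of `{1,…,n}`, viewed as a word containing each of `1,…,n` exactly once. -/
def IsPermWord (n : ℕ) (w : List ℕ) : Prop := w.Perm (List.range' 1 n)

/-- The standardization of a word `w` of distinct letters: each letter is replaced by its rank. -/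
def stdize (w : List ℕ) : List ℕ := w.map fun x => (w.filter fun y => decide (y ≤ x)).length

/-- `τ` avoids the set of patterns `P`: no nonempty subsequence of `τ` standardizes to a pattern. -/
def AvoidsSet (P : Set (List ℕ)) (τ : List ℕ) : Prop :=
  ∀ u : List ℕ, u.Sublist τ → u ≠ [] → stdize u ∉ P
/-- `τ↓_i` for `τ ∈ S_n`: delete the `i`-th largest letter `n - i + 1` and standardize. -/
def delOp (n i : ℕ) (τ : List ℕ) : List ℕ := stdize (τ.erase (n - i + 1))

/-- The set of `P`-hits in `τ ∈ S_n` containing the entire `i`-upfix of `τ`,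
i.e. containing all the letters `n - i + 1, …, n` (empty when `i > n`, since there
is then no `i`-upfix). -/
def hitsUsingUpfix (P : Set (List ℕ)) (n i : ℕ) (τ : List ℕ) : Set (List ℕ) :=
  {u | u.Sublist τ ∧ stdize u ∈ P ∧ i ≤ n ∧ ∀ j, n - i + 1 ≤ j → j ≤ n → j ∈ u}

/-- `P_i(τ)`: the number of `P`-hits in `τ ∈ S_n` containing the entire `i`-upfix of `τ`. -/
noncomputable def Pcount (P : Set (List ℕ)) (n i : ℕ) (τ : List ℕ) : ℕ :=
  (hitsUsingUpfix P n i τ).ncard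

lemma filter_le_range' {n x : ℕ} (hx : x ≤ n) :
    (List.range' 1 n).filter (fun y => decide (y ≤ x)) = List.range' 1 x := by
  have h : List.range' 1 n = List.range' 1 x ++ List.range' (1 + x) (n - x) := by
    have h0 := List.range'_append (s := 1) (m := x) (n := n-x) (step := 1)
    have e1 : 1 + 1 * x = 1 + x := by ring
    have e2 : x + (n - x) = n := by omega
    rw [e1, e2] at h0
    exact h0.symm
  rw [h, List.filter_append]
  have h1 : (List.range' 1 x).filter (fun y => decide (y ≤ x)) = List.range' 1 x :=
    List.filter_eq_self.mpr (by intro a ha; simp only [List.mem_range'_1] at ha; simp; omega)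
  have h2 : (List.range' (1 + x) (n - x)).filter (fun y => decide (y ≤ x)) = [] :=
    List.filter_eq_nil_iff.mpr (by intro a ha; simp only [List.mem_range'_1] at ha; simp; omega)
  rw [h1, h2, List.append_nil]

lemma rank_perm {w w' : List ℕ} (h : w.Perm w') (x : ℕ) :
    (w.filter (fun y => decide (y ≤ x))).length = (w'.filter (fun y => decide (y ≤ x))).length :=
  (h.filter _).length_eq

lemma stdize_perm_word {n : ℕ} {τ : List ℕ} (hτ : IsPermWord n τ) : stdize τ = τ := by
  unfold stdize
  have : ∀ x ∈ τ, (τ.filter (fun y => decide (y ≤ x))).length = x := by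
    intro x hx
    have hxr : x ∈ List.range' 1 n := hτ.mem_iff.mp hx
    rw [List.mem_range'_1] at hxr
    rw [rank_perm hτ x, filter_le_range' (by omega), List.length_range']
  calc τ.map (fun x => (τ.filter (fun y => decide (y ≤ x))).length) = τ.map id := by
        apply List.map_congr_left; intro x hx; simp [this x hx]
    _ = τ := List.map_id τ

lemma rank_erase {n m x : ℕ} (hm1 : 1 ≤ m) (hmn : m ≤ n) (hx1 : 1 ≤ x) (hxn : x ≤ n)
    (hxm : x ≠ m) :
    (((List.range' 1 n).erase m).filter (fun y => decide (y ≤ x))).length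
      = if x < m then x else x - 1 := by
  have hnd : (List.range' 1 n).Nodup := List.nodup_range' (s := 1) (n := n) 1 one_pos
  have hndx : (List.range' 1 x).Nodup := List.nodup_range' (s := 1) (n := x) 1 one_pos
  rw [hnd.erase_eq_filter]
  have hcomm : ((List.range' 1 n).filter (fun y => y != m)).filter (fun y => decide (y ≤ x))
      = ((List.range' 1 n).filter (fun y => decide (y ≤ x))).filter (fun y => y != m) := by
    simp only [List.filter_filter]
    apply List.filter_congr
    intro a _
    exact Bool.and_comm _ _
  rw [hcomm, filter_le_range' hxn, ← hndx.erase_eq_filter]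
  by_cases hc : m ≤ x
  · have hmem : m ∈ List.range' 1 x := by rw [List.mem_range'_1]; omega
    rw [List.length_erase_of_mem hmem, List.length_range', if_neg (by omega)]
  · rw [List.erase_of_not_mem (by rw [List.mem_range'_1]; omega), List.length_range',
      if_pos (by omega)]

lemma stdize_map_of_mono (f : ℕ → ℕ) (u : List ℕ)
    (h : ∀ a ∈ u, ∀ b ∈ u, (b ≤ a ↔ f b ≤ f a)) : stdize (u.map f) = stdize u := by
  unfold stdize
  rw [List.map_map]
  apply List.map_congr_left
  intro x hx
  simp only [Function.comp_apply]
  rw [List.filter_map, List.length_map]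
  congr 1
  apply List.filter_congr
  intro y hy
  simp only [Function.comp_apply, decide_eq_decide]
  exact (h x hx y hy).symm

lemma hits_finite (P : Set (List ℕ)) (n i : ℕ) (τ : List ℕ) :
    (hitsUsingUpfix P n i τ).Finite := by
  apply Set.Finite.subset (Set.finite_mem_finset τ.sublists.toFinset)
  intro u hu
  simp only [List.mem_toFinset, Set.mem_setOf_eq, List.mem_sublists] at *
  exact hu.1

/-- for `u` sublist of a perm word containing all of `1..n`, `u = τ`. -/
lemma sublist_all {n : ℕ} {τ u : List ℕ} (hτ : IsPermWord n τ) (hs : u.Sublist τ)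
    (hall : ∀ j, 1 ≤ j → j ≤ n → j ∈ u) : u = τ := by
  apply hs.eq_of_length_le
  have hlen : τ.length = n := by rw [hτ.length_eq, List.length_range']
  rw [hlen]
  have hnd : u.Nodup := ((hτ.nodup_iff).mpr (List.nodup_range' (s := 1) (n := n) 1 one_pos)).sublist hs
  have hsub : List.range' 1 n ⊆ u := by
    intro j hj; rw [List.mem_range'_1] at hj; exact hall j hj.1 (by omega)
  calc n = (List.range' 1 n).toFinset.card := by
        rw [List.toFinset_card_of_nodup (List.nodup_range' (s := 1) (n := n) 1 one_pos), List.length_range']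
    _ ≤ u.toFinset.card := Finset.card_le_card (fun x hx => by
        rw [List.mem_toFinset] at *; exact hsub hx)
    _ = u.length := List.toFinset_card_of_nodup hnd

/-- letters of a hit are at least `i` many -/
lemma hit_length_ge {n i : ℕ} {u : List ℕ} (hin : i ≤ n) (hnd : u.Nodup)
    (hall : ∀ j, n - i + 1 ≤ j → j ≤ n → j ∈ u) : i ≤ u.length := by
  have hsub : List.range' (n - i + 1) i ⊆ u := by
    intro j hj; rw [List.mem_range'_1] at hj; exact hall j hj.1 (by omega)
  calc i = (List.range' (n - i + 1) i).toFinset.card := by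
        rw [List.toFinset_card_of_nodup (List.nodup_range' 1 one_pos), List.length_range']
    _ ≤ u.toFinset.card := Finset.card_le_card (fun x hx => by
        rw [List.mem_toFinset] at *; exact hsub hx)
    _ = u.length := List.toFinset_card_of_nodup hnd

theorem statement4 (P : Set (List ℕ)) (k : ℕ)
    (hP : ∀ π ∈ P, IsPermWord π.length π ∧ 1 ≤ π.length ∧ π.length ≤ k)
    (hk : ∃ π ∈ P, π.length = k)
    (n : ℕ) (τ : List ℕ) (hτ : IsPermWord n τ) (i : ℕ) :
    (i < n → i ≤ k →
      Pcount P n i τ = Pcount P n (i + 1) τ + Pcount P (n - 1) i (delOp n (i + 1) τ)) ∧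
    (i = n → τ ∈ P → Pcount P n i τ = 1) ∧
    (¬(i < n ∧ i ≤ k) → ¬(i = n ∧ τ ∈ P) → Pcount P n i τ = 0) := by
  have hτnd : τ.Nodup := hτ.nodup_iff.mpr (List.nodup_range' (s := 1) (n := n) 1 one_pos)
  have hτmem : ∀ x ∈ τ, 1 ≤ x ∧ x ≤ n := by
    intro x hx
    have := hτ.mem_iff.mp hx
    rw [List.mem_range'_1] at this
    omega
  refine ⟨?_, ?_, ?_⟩
  · -- recurrence
    intro hin hik
    set m := n - i with hm
    have hm1 : 1 ≤ m := by omega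
    have hmi : n - (i+1) + 1 = m := by omega
    have hni1 : n - i + 1 = m + 1 := by omega
    set g : ℕ → ℕ := fun x => if x < m then x else x - 1 with hg
    set h : ℕ → ℕ := fun y => if y < m then y else y + 1 with hh
    have hgh : ∀ x, x ≠ m → h (g x) = x := by
      intro x hx; simp only [hg, hh]; split_ifs <;> omega
    have hgmono : ∀ a b : ℕ, a ≠ m → b ≠ m → (b ≤ a ↔ g b ≤ g a) := by
      intro a b ha hb; simp only [hg]; split_ifs <;> omega
    have herasend : (τ.erase m).Nodup := hτnd.sublist (List.erase_sublist (a := m) (l := τ))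
    have hmem_erase : ∀ x ∈ τ.erase m, x ≠ m ∧ 1 ≤ x ∧ x ≤ n := by
      intro x hx
      have h1 := (hτnd.mem_erase_iff).mp hx
      exact ⟨h1.1, (hτmem x h1.2).1, (hτmem x h1.2).2⟩
    -- delOp expressed as a map
    have hdel : delOp n (i+1) τ = (τ.erase m).map g := by
      unfold delOp
      rw [hmi]
      unfold stdize
      apply List.map_congr_left
      intro x hx
      obtain ⟨hxm, hx1, hxn⟩ := hmem_erase x hx
      rw [rank_perm (hτ.erase m) x, rank_erase hm1 (by omega) hx1 hxn hxm]
    -- the split of the hit set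
    set B : Set (List ℕ) := {u | u ∈ hitsUsingUpfix P n i τ ∧ m ∉ u} with hB
    have hA1 : hitsUsingUpfix P n (i+1) τ = {u | u ∈ hitsUsingUpfix P n i τ ∧ m ∈ u} := by
      ext u
      simp only [hitsUsingUpfix, Set.mem_setOf_eq]
      constructor
      · rintro ⟨hs, hp, hle, hall⟩
        rw [hmi] at hall
        exact ⟨⟨hs, hp, by omega, fun j hj1 hj2 => hall j (by omega) hj2⟩,
          hall m le_rfl (by omega)⟩
      · rintro ⟨⟨hs, hp, hle, hall⟩, hmem⟩
        rw [hni1] at hall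
        refine ⟨hs, hp, by omega, fun j hj1 hj2 => ?_⟩
        rw [hmi] at hj1
        rcases eq_or_lt_of_le hj1 with hq | hq
        · exact hq ▸ hmem
        · exact hall j (by omega) hj2
    have hunion : hitsUsingUpfix P n i τ = hitsUsingUpfix P n (i+1) τ ∪ B := by
      rw [hA1]
      ext u
      simp only [hB, Set.mem_union, Set.mem_setOf_eq]
      by_cases hc : m ∈ u <;> tauto
    have hdisj : Disjoint (hitsUsingUpfix P n (i+1) τ) B := by
      rw [Set.disjoint_left, hA1]
      rintro u ⟨_, hmem⟩ ⟨_, hnmem⟩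
      exact hnmem hmem
    have hBfin : B.Finite := (hits_finite P n i τ).subset (fun u hu => hu.1)
    -- the bijection for B
    have himg : (List.map g) '' B = hitsUsingUpfix P (n-1) i (delOp n (i+1) τ) := by
      ext v
      constructor
      · rintro ⟨u, ⟨⟨hs, hp, hle, hall⟩, hnm⟩, rfl⟩
        rw [hni1] at hall
        have humem : ∀ x ∈ u, x ≠ m := fun x hx hxm => hnm (hxm ▸ hx)
        have hsub : u.Sublist (τ.erase m) := by
          have h1 : u.filter (fun y => y != m) = u :=
            List.filter_eq_self.mpr (fun a ha => by simpa using humem a ha)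
          have h2 := hs.filter (fun y => y != m)
          rwa [h1, ← hτnd.erase_eq_filter] at h2
        refine ⟨hdel ▸ hsub.map g, ?_, by omega, ?_⟩
        · rwa [stdize_map_of_mono g u (fun a ha b hb => hgmono a b (humem a ha) (humem b hb))]
        · intro j hj1 hj2
          have hj1' : m ≤ j := by omega
          have : j + 1 ∈ u := hall (j+1) (by omega) (by omega)
          exact List.mem_map.mpr ⟨j + 1, this, by simp only [hg]; split_ifs <;> omega⟩
      · rintro ⟨hs, hp, hle, hall⟩
        rw [hdel] at hs
        obtain ⟨u, hsub, rfl⟩ := List.sublist_map_iff.mp hs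
        have humem : ∀ x ∈ u, x ≠ m ∧ 1 ≤ x ∧ x ≤ n :=
          fun x hx => hmem_erase x (hsub.subset hx)
        have hstd : stdize (u.map g) = stdize u :=
          stdize_map_of_mono g u (fun a ha b hb => hgmono a b (humem a ha).1 (humem b hb).1)
        refine ⟨u, ⟨⟨hsub.trans (List.erase_sublist (a := m) (l := τ)), by rwa [hstd] at hp, by omega, ?_⟩,
          fun hmm => ((humem m hmm).1 rfl)⟩, rfl⟩
        intro j hj1 hj2
        rw [hni1] at hj1
        have : j - 1 ∈ u.map g := hall (j-1) (by omega) (by omega)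
        obtain ⟨x, hxu, hgx⟩ := List.mem_map.mp this
        have hxm := (humem x hxu).1
        have : x = j := by simp only [hg] at hgx; split_ifs at hgx <;> omega
        exact this ▸ hxu
    have hinj : Set.InjOn (List.map g) B := by
      rintro u₁ ⟨⟨_, _, _, _⟩, h1⟩ u₂ ⟨⟨_, _, _, _⟩, h2⟩ heq
      have e1 : (u₁.map g).map h = u₁ := by
        rw [List.map_map,
          List.map_congr_left (f := h ∘ g) (g := id)
            (fun x hx => hgh x (fun hxm => h1 (hxm ▸ hx))), List.map_id]
      have e2 : (u₂.map g).map h = u₂ := by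
        rw [List.map_map,
          List.map_congr_left (f := h ∘ g) (g := id)
            (fun x hx => hgh x (fun hxm => h2 (hxm ▸ hx))), List.map_id]
      rw [← e1, ← e2, heq]
    unfold Pcount
    rw [hunion, Set.ncard_union_eq hdisj (hits_finite P n (i+1) τ) hBfin]
    congr 1
    rw [← himg, Set.ncard_image_of_injOn hinj]
  · -- i = n and τ ∈ P
    intro hin hτP
    rw [hin]
    have hset : hitsUsingUpfix P n n τ = {τ} := by
      ext u
      simp only [hitsUsingUpfix, Set.mem_setOf_eq, Set.mem_singleton_iff]
      constructor
      · rintro ⟨hs, hp, hle, hall⟩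
        exact sublist_all hτ hs (fun j hj1 hj2 => hall j (by omega) hj2)
      · intro hu
        rw [hu]
        exact ⟨List.Sublist.refl τ, by rwa [stdize_perm_word hτ], le_rfl,
          fun j hj1 hj2 => hτ.mem_iff.mpr (by rw [List.mem_range'_1]; omega)⟩
    rw [Pcount, hset, Set.ncard_singleton]
  · -- degenerate cases
    intro hc1 hc2
    have hset : hitsUsingUpfix P n i τ = ∅ := by
      ext u
      simp only [hitsUsingUpfix, Set.mem_setOf_eq, Set.mem_empty_iff_false, iff_false]
      rintro ⟨hs, hp, hle, hall⟩
      rcases lt_trichotomy i n with hin | hin | hin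
      · -- i < n, so k < i
        have hik : k < i := by omega
        have hlen : u.length ≤ k := by
          have := (hP _ hp).2.2
          rwa [stdize, List.length_map] at this
        have := hit_length_ge hle (hτnd.sublist hs) hall
        omega
      · -- i = n, τ ∉ P
        rw [hin] at hall
        have hu : u = τ := sublist_all hτ hs (fun j hj1 hj2 => hall j (by omega) hj2)
        subst hu
        rw [stdize_perm_word hτ] at hp
        exact hc2 ⟨hin, hp⟩
      · omega
    rw [Pcount, hset, Set.ncard_empty]
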